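/- arXiv:2201.03220 — 4 statements merged into one kernel-verified Lean document; each statement's English description precedes it below -/
import Mathlib

section
/- Correctness of branching on a vertex: for any graph G = (V, E) and any vertex v, the maximum induced matching size of G equals the maximum over the following alternatives: (a) the maximum induced matching size of G[V \ {v}], and (b) for each neighbour w of v, one plus the maximum induced matching size of G[V \ (N[v] ∪ N[w])]. -/
open SimpleGraph

/-- A set `M` of edges of `G` is an induced matching: all elements are edges of `G`,
and any two distinct edges of `M` neither share an endpoint nor have adjacent endpoints;
equivalently every vertex of the subgraph induced by the endpoints of `M` has degree 1. -/
def IsInducedMatching {V : Type*} (G : SimpleGraph V) (M : Set (Sym2 V)) : Prop :=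
  M ⊆ G.edgeSet ∧
    ∀ e ∈ M, ∀ f ∈ M, e ≠ f → ∀ u ∈ e, ∀ v ∈ f, u ≠ v ∧ ¬ G.Adj u v

/-- The maximum cardinality of an induced matching of `G`. -/
noncomputable def maxIM {V : Type*} (G : SimpleGraph V) : ℕ :=
  sSup {k | ∃ M : Finset (Sym2 V), IsInducedMatching G (↑M) ∧ M.card = k}

section Aux

variable {V : Type*}

lemma IM_set_nonempty (G : SimpleGraph V) :
    {k | ∃ M : Finset (Sym2 V), IsInducedMatching G (↑M) ∧ M.card = k}.Nonempty := by
  refine ⟨0, ∅, ⟨?_, ?_⟩, rfl⟩ <;> simp [IsInducedMatching]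

lemma IM_set_bddAbove [Fintype V] (G : SimpleGraph V) :
    BddAbove {k | ∃ M : Finset (Sym2 V), IsInducedMatching G (↑M) ∧ M.card = k} := by
  classical
  refine ⟨Fintype.card (Sym2 V), ?_⟩
  rintro k ⟨M, _, rfl⟩
  exact Finset.card_le_univ M

lemma maxIM_mem [Fintype V] (G : SimpleGraph V) :
    ∃ M : Finset (Sym2 V), IsInducedMatching G (↑M) ∧ M.card = maxIM G :=
  Nat.sSup_mem (IM_set_nonempty G) (IM_set_bddAbove G)

lemma le_maxIM [Fintype V] (G : SimpleGraph V) {M : Finset (Sym2 V)}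
    (h : IsInducedMatching G (↑M)) : M.card ≤ maxIM G :=
  le_csSup (IM_set_bddAbove G) ⟨M, h, rfl⟩

/-- Lifting an induced matching of an induced subgraph to the whole graph. -/
lemma lift_IM (G : SimpleGraph V) (s : Set V) (M : Finset (Sym2 s))
    (hM : IsInducedMatching (G.induce s) (↑M)) :
    ∃ N : Finset (Sym2 V), IsInducedMatching G (↑N) ∧ N.card = M.card ∧
      ∀ e ∈ N, ∀ x ∈ e, x ∈ s := by
  classical
  refine ⟨M.image (Sym2.map (Subtype.val : s → V)), ⟨?_, ?_⟩, ?_, ?_⟩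
  · rintro e' he'
    simp only [Finset.coe_image, Set.mem_image, Finset.mem_coe] at he'
    obtain ⟨e, he, rfl⟩ := he'
    have := hM.1 he
    induction e with
    | _ a b =>
      simpa using this
  · rintro e' he' f' hf' hne u hu w hw
    simp only [Finset.mem_coe, Finset.mem_image] at he' hf'
    obtain ⟨e, he, rfl⟩ := he'
    obtain ⟨f, hf, rfl⟩ := hf'
    obtain ⟨u0, hu0, rfl⟩ := Sym2.mem_map.mp hu
    obtain ⟨w0, hw0, rfl⟩ := Sym2.mem_map.mp hw
    have hef : e ≠ f := by rintro rfl; exact hne rfl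
    have := hM.2 e he f hf hef u0 hu0 w0 hw0
    exact ⟨fun h => this.1 (Subtype.ext h), fun h => this.2 h⟩
  · exact Finset.card_image_of_injective _ (Sym2.map.injective Subtype.val_injective)
  · rintro e' he' x hx
    simp only [Finset.mem_image] at he'
    obtain ⟨e, he, rfl⟩ := he'
    obtain ⟨x0, _, rfl⟩ := Sym2.mem_map.mp hx
    exact x0.2

/-- Restricting an induced matching whose endpoints all lie in `s` to `G.induce s`. -/
lemma restrict_IM (G : SimpleGraph V) (s : Set V) (M : Finset (Sym2 V))
    (hM : IsInducedMatching G (↑M)) (hs : ∀ e ∈ M, ∀ x ∈ e, x ∈ s) :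
    ∃ N : Finset (Sym2 s), IsInducedMatching (G.induce s) (↑N) ∧ N.card = M.card := by
  classical
  rcases M.eq_empty_or_nonempty with rfl | ⟨e0, he0⟩
  · exact ⟨∅, ⟨by simp, by simp⟩, by simp⟩
  have hsne : s.Nonempty := by
    induction e0 with
    | _ a b => exact ⟨a, hs _ he0 a (by simp)⟩
  obtain ⟨x0, hx0⟩ := hsne
  set g : V → s := fun x => if h : x ∈ s then ⟨x, h⟩ else ⟨x0, hx0⟩ with hg
  have hgval : ∀ x ∈ s, (g x : V) = x := fun x hx => by simp [hg, hx]
  have hback : ∀ e ∈ M, Sym2.map (Subtype.val : s → V) (Sym2.map g e) = e := by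
    intro e he
    rw [Sym2.map_map]
    induction e with
    | _ a b =>
      simp only [Sym2.map_pair_eq, Function.comp_apply]
      rw [hgval a (hs _ he a (by simp)), hgval b (hs _ he b (by simp))]
  refine ⟨M.image (Sym2.map g), ⟨?_, ?_⟩, ?_⟩
  · rintro e' he'
    simp only [Finset.coe_image, Set.mem_image, Finset.mem_coe] at he'
    obtain ⟨e, he, rfl⟩ := he'
    have h1 := hM.1 (Finset.mem_coe.mpr he)
    induction e with
    | _ a b =>
      have ha := hs _ he a (by simp)
      have hb := hs _ he b (by simp)
      simp only [Sym2.map_pair_eq, mem_edgeSet] at h1 ⊢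
      simp only [comap_adj, Function.Embedding.coe_subtype]
      rw [hgval a ha, hgval b hb]
      exact h1
  · rintro e' he' f' hf' hne u hu w hw
    simp only [Finset.mem_coe, Finset.mem_image] at he' hf'
    obtain ⟨e, he, rfl⟩ := he'
    obtain ⟨f, hf, rfl⟩ := hf'
    have hef : e ≠ f := by rintro rfl; exact hne rfl
    obtain ⟨u0, hu0, rfl⟩ := Sym2.mem_map.mp hu
    obtain ⟨w0, hw0, rfl⟩ := Sym2.mem_map.mp hw
    have hu0s := hs _ he u0 hu0
    have hw0s := hs _ hf w0 hw0
    have key := hM.2 e he f hf hef u0 hu0 w0 hw0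
    constructor
    · intro h
      apply key.1
      have : ((g u0 : s) : V) = ((g w0 : s) : V) := by rw [h]
      rwa [hgval u0 hu0s, hgval w0 hw0s] at this
    · intro h
      apply key.2
      have : G.Adj ((g u0 : s) : V) ((g w0 : s) : V) := h
      rwa [hgval u0 hu0s, hgval w0 hw0s] at this
  · apply Finset.card_image_of_injOn
    intro e1 h1 e2 h2 hee
    have := congrArg (Sym2.map (Subtype.val : s → V)) hee
    rwa [hback e1 h1, hback e2 h2] at this

end Aux

/-- correctness of branching on a vertex: the maximum induced matching
size of `G` is the maximum of (a) that of `G[V \ {v}]` and (b), over all neighbours `w`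
of `v`, of `1` plus that of `G[V \ (N[v] ∪ N[w])]`. -/
theorem stmt_7 {V : Type*} [Fintype V] (G : SimpleGraph V) (v : V) :
    maxIM G =
      max (maxIM (G.induce {u : V | u ≠ v}))
        (sSup {k : ℕ | ∃ w : V, G.Adj v w ∧
          k = 1 + maxIM (G.induce
            ((insert v (G.neighborSet v) ∪ insert w (G.neighborSet w))ᶜ))}) := by
  classical
  set B := {k : ℕ | ∃ w : V, G.Adj v w ∧
      k = 1 + maxIM (G.induce
        ((insert v (G.neighborSet v) ∪ insert w (G.neighborSet w))ᶜ))} with hB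
  have hBbdd : BddAbove B := by
    apply Set.Finite.bddAbove
    apply Set.Finite.subset (Set.finite_range
      (fun w : V => 1 + maxIM (G.induce
        ((insert v (G.neighborSet v) ∪ insert w (G.neighborSet w))ᶜ))))
    rintro k ⟨w, _, rfl⟩
    exact ⟨w, rfl⟩
  apply le_antisymm
  · -- maxIM G ≤ max ...
    obtain ⟨M, hM, hcard⟩ := maxIM_mem G
    by_cases hv : ∀ e ∈ M, v ∉ e
    · -- case (a)
      apply le_trans _ (le_max_left _ _)
      have hs : ∀ e ∈ M, ∀ x ∈ e, x ∈ {u : V | u ≠ v} := by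
        intro e he x hx
        intro h; exact hv e he (h ▸ hx)
      obtain ⟨N, hN, hNcard⟩ := restrict_IM G _ M hM hs
      rw [← hcard, ← hNcard]
      exact le_maxIM _ hN
    · -- case (b)
      push_neg at hv
      obtain ⟨e0, he0, hve0⟩ := hv
      obtain ⟨w, rfl⟩ := Sym2.mem_iff_exists.mp hve0
      have hadj : G.Adj v w := (mem_edgeSet G).mp (hM.1 (Finset.mem_coe.mpr he0))
      set t := ((insert v (G.neighborSet v) ∪ insert w (G.neighborSet w))ᶜ : Set V)
      have hs : ∀ e ∈ M.erase s(v, w), ∀ x ∈ e, x ∈ t := by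
        intro e he x hx
        have hne : e ≠ s(v, w) := Finset.ne_of_mem_erase he
        have heM : e ∈ M := Finset.mem_of_mem_erase he
        have hkv := hM.2 e heM s(v, w) he0 hne x hx v (by simp)
        have hkw := hM.2 e heM s(v, w) he0 hne x hx w (by simp)
        simp only [t, Set.mem_compl_iff, Set.mem_union, Set.mem_insert_iff,
          mem_neighborSet, not_or]
        exact ⟨⟨hkv.1, fun h => hkv.2 h.symm⟩, ⟨hkw.1, fun h => hkw.2 h.symm⟩⟩
      have hM' : IsInducedMatching G (↑(M.erase s(v, w))) := by
        refine ⟨fun e he => hM.1 (Finset.mem_coe.mpr (Finset.mem_of_mem_erase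
          (Finset.mem_coe.mp he))), ?_⟩
        intro e he f hf hne u hu x hx
        exact hM.2 e (Finset.mem_of_mem_erase (Finset.mem_coe.mp he))
          f (Finset.mem_of_mem_erase (Finset.mem_coe.mp hf)) hne u hu x hx
      obtain ⟨N, hN, hNcard⟩ := restrict_IM G t (M.erase s(v, w)) hM' hs
      have hle : M.card - 1 ≤ maxIM (G.induce t) := by
        rw [← Finset.card_erase_of_mem he0, ← hNcard]
        exact le_maxIM _ hN
      have hpos : 1 ≤ M.card := Finset.card_pos.mpr ⟨_, he0⟩
      have hkey : maxIM G ≤ 1 + maxIM (G.induce t) := by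
        omega
      apply le_trans hkey (le_trans _ (le_max_right _ _))
      exact le_csSup hBbdd ⟨w, hadj, rfl⟩
  · -- max ... ≤ maxIM G
    apply max_le
    · -- (a)
      obtain ⟨N, hN, hNcard⟩ := maxIM_mem (G.induce {u : V | u ≠ v})
      obtain ⟨M, hM, hMcard, _⟩ := lift_IM G _ N hN
      rw [← hNcard, ← hMcard]
      exact le_maxIM _ hM
    · -- (b)
      apply csSup_le'
      rintro k ⟨w, hadj, rfl⟩
      set t := ((insert v (G.neighborSet v) ∪ insert w (G.neighborSet w))ᶜ : Set V)
      obtain ⟨N, hN, hNcard⟩ := maxIM_mem (G.induce t)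
      obtain ⟨M, hM, hMcard, hMs⟩ := lift_IM G t N hN
      have htv : v ∉ t := by simp [t]
      have htw : w ∉ t := by simp [t]
      have hMt : ∀ e ∈ M, ∀ x ∈ e, x ≠ v ∧ ¬G.Adj v x ∧ x ≠ w ∧ ¬G.Adj w x := by
        intro e he x hx
        have := hMs e he x hx
        simp only [t, Set.mem_compl_iff, Set.mem_union, Set.mem_insert_iff,
          mem_neighborSet, not_or] at this
        exact ⟨this.1.1, this.1.2, this.2.1, this.2.2⟩
      have hnotmem : s(v, w) ∉ M := by
        intro h
        exact (hMt _ h v (by simp)).1 rfl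
      have hins : IsInducedMatching G (↑(insert s(v, w) M)) := by
        constructor
        · intro e he
          simp only [Finset.coe_insert, Set.mem_insert_iff, Finset.mem_coe] at he
          rcases he with rfl | he
          · exact hadj
          · exact hM.1 (Finset.mem_coe.mpr he)
        · intro e he f hf hne u hu x hx
          simp only [Finset.mem_coe, Finset.mem_insert] at he hf
          rcases he with rfl | he <;> rcases hf with rfl | hf
          · exact absurd rfl hne
          · -- e = s(v,w), f ∈ M
            have hx' := hMt f hf x hx
            rcases Sym2.mem_iff.mp hu with rfl | rfl
            · exact ⟨fun h => hx'.1 h.symm, fun h => hx'.2.1 h⟩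
            · exact ⟨fun h => hx'.2.2.1 h.symm, fun h => hx'.2.2.2 h⟩
          · -- e ∈ M, f = s(v,w)
            have hu' := hMt e he u hu
            rcases Sym2.mem_iff.mp hx with rfl | rfl
            · exact ⟨hu'.1, fun h => hu'.2.1 h.symm⟩
            · exact ⟨hu'.2.2.1, fun h => hu'.2.2.2 h.symm⟩
          · exact hM.2 e he f hf hne u hu x hx
      have : (insert s(v, w) M).card = 1 + maxIM (G.induce t) := by
        rw [Finset.card_insert_of_notMem hnotmem, hMcard, hNcard]; omega
      rw [← this]
      exact le_maxIM _ hins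
end

section
/- Soundness of simplification rule S3 (pendant-edge case): let G be a graph, b a vertex of degree 2 with neighbours d and c, where c has degree 1. Then there is a maximum induced matching of G that contains the edge {b, c}; consequently the maximum induced matching size of G equals 1 plus the maximum induced matching size of G with vertices b, c, d removed. -/
open SimpleGraph

lemma im_bdd {V : Type*} [Fintype V] [DecidableEq V] (G : SimpleGraph V) :
    BddAbove {k | ∃ M : Finset (Sym2 V), IsInducedMatching G (↑M) ∧ M.card = k} := by
  refine ⟨Fintype.card (Sym2 V), ?_⟩
  rintro k ⟨M, _, rfl⟩
  exact Finset.card_le_univ M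

lemma card_le_maxIM {V : Type*} [Fintype V] [DecidableEq V] (G : SimpleGraph V)
    {M : Finset (Sym2 V)} (h : IsInducedMatching G (↑M)) : M.card ≤ maxIM G :=
  le_csSup (im_bdd G) ⟨M, h, rfl⟩

lemma exists_max {V : Type*} [Fintype V] [DecidableEq V] (G : SimpleGraph V) :
    ∃ M : Finset (Sym2 V), IsInducedMatching G (↑M) ∧ M.card = maxIM G := by
  have hne : {k | ∃ M : Finset (Sym2 V), IsInducedMatching G (↑M) ∧ M.card = k}.Nonempty :=
    ⟨0, ∅, ⟨by simp, by simp⟩, rfl⟩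
  have h := Nat.sSup_mem hne (im_bdd G)
  obtain ⟨M, hM, hc⟩ := h
  exact ⟨M, hM, hc⟩

lemma induce_edgeSet {V : Type*} (G : SimpleGraph V) (s : Set V) (z : Sym2 ↥s) :
    z ∈ (G.induce s).edgeSet ↔ z.map Subtype.val ∈ G.edgeSet := by
  induction z using Sym2.ind with
  | _ x y => simp

lemma lift_lemma {V : Type*} [DecidableEq V] (G : SimpleGraph V) (b c d : V)
    (hbc : G.Adj b c) (hbadj : ∀ x, G.Adj b x → x = d ∨ x = c)
    (hcadj : ∀ x, G.Adj c x → x = b)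
    (M' : Finset (Sym2 ↥(({b, c, d} : Set V)ᶜ)))
    (hM' : IsInducedMatching (G.induce (({b, c, d} : Set V)ᶜ)) ↑M') :
    ∃ L : Finset (Sym2 V), IsInducedMatching G ↑L ∧ L.card = M'.card + 1 ∧ s(b, c) ∈ L := by
  classical
  refine ⟨insert s(b, c) (M'.image (Sym2.map Subtype.val)), ?_, ?_, Finset.mem_insert_self _ _⟩
  · -- IsInducedMatching
    have hmapmem : ∀ z ∈ M'.image (Sym2.map Subtype.val),
        z ∈ G.edgeSet ∧ ∀ x ∈ z, x ∉ ({b,c,d} : Set V) := by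
      intro z hz
      obtain ⟨z', hz', rfl⟩ := Finset.mem_image.mp hz
      constructor
      · exact (induce_edgeSet G _ z').mp (hM'.1 (Finset.mem_coe.mpr hz'))
      · intro x hx
        obtain ⟨a, _, rfl⟩ := Sym2.mem_map.mp hx
        exact a.2
    have hcompat : ∀ z ∈ M'.image (Sym2.map Subtype.val),
        ∀ u ∈ s(b, c), ∀ v ∈ z, (u ≠ v ∧ ¬G.Adj u v) ∧ (v ≠ u ∧ ¬G.Adj v u) := by
      intro z hz u hu v hv
      have hvS : v ∉ ({b,c,d} : Set V) := (hmapmem z hz).2 v hv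
      rw [Sym2.mem_iff] at hu
      have h1 : u ≠ v := by
        rintro rfl
        rcases hu with rfl | rfl
        · exact hvS (by simp)
        · exact hvS (by simp)
      have h2 : ¬ G.Adj u v := by
        intro h
        rcases hu with rfl | rfl
        · rcases hbadj v h with rfl | rfl
          · exact hvS (by simp)
          · exact hvS (by simp)
        · rcases hcadj v h
          exact hvS (by simp)
      exact ⟨⟨h1, h2⟩, h1.symm, fun h => h2 h.symm⟩
    constructor
    · intro z hz
      rw [Finset.mem_coe, Finset.mem_insert] at hz
      rcases hz with rfl | hz
      · exact hbc
      · exact (hmapmem z hz).1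
    · intro e he f hf hne u hu v hv
      rw [Finset.mem_coe, Finset.mem_insert] at he hf
      rcases he with rfl | he <;> rcases hf with rfl | hf
      · exact absurd rfl hne
      · exact (hcompat f hf u hu v hv).1
      · exact (hcompat e he v hv u hu).2
      · obtain ⟨e', he', rfl⟩ := Finset.mem_image.mp he
        obtain ⟨f', hf', rfl⟩ := Finset.mem_image.mp hf
        have hne' : e' ≠ f' := fun h => hne (by rw [h])
        obtain ⟨a, ha, rfl⟩ := Sym2.mem_map.mp hu
        obtain ⟨a2, ha2, rfl⟩ := Sym2.mem_map.mp hv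
        obtain ⟨hne2, hnadj⟩ := hM'.2 e' (Finset.mem_coe.mpr he') f' (Finset.mem_coe.mpr hf') hne' a ha a2 ha2
        refine ⟨fun h => hne2 (Subtype.ext h), fun h => hnadj ?_⟩
        simpa using h
  · -- card
    have hnm : s(b, c) ∉ M'.image (Sym2.map Subtype.val) := by
      intro hmem
      obtain ⟨z', _, heq⟩ := Finset.mem_image.mp hmem
      have : b ∈ Sym2.map Subtype.val z' := heq.symm ▸ Sym2.mem_mk_left b c
      obtain ⟨a, _, hav⟩ := Sym2.mem_map.mp this
      exact a.2 (by simp [← hav])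
    rw [Finset.card_insert_of_notMem hnm, Finset.card_image_of_injective _
      (Sym2.map.injective Subtype.val_injective)]

lemma proj_lemma {V : Type*} [DecidableEq V] (G : SimpleGraph V) (b c d : V)
    (M : Finset (Sym2 V)) (hM : IsInducedMatching G ↑M) (hmem : s(b, c) ∈ M)
    (havoid : ∀ e ∈ M, e ≠ s(b, c) → ∀ x ∈ e, x ∈ (({b, c, d} : Set V)ᶜ)) :
    ∃ M'' : Finset (Sym2 ↥(({b, c, d} : Set V)ᶜ)),
      IsInducedMatching (G.induce (({b, c, d} : Set V)ᶜ)) ↑M'' ∧ M''.card + 1 = M.card := by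
  classical
  set M0 : Finset (Sym2 V) := M.erase s(b, c) with hM0
  have h0 : ∀ e ∈ M0, ∀ x ∈ e, x ∈ (({b, c, d} : Set V)ᶜ) := by
    intro e he
    exact havoid e (Finset.mem_of_mem_erase he) (Finset.ne_of_mem_erase he)
  set F : {e // e ∈ M0} → Sym2 ↥(({b, c, d} : Set V)ᶜ) :=
    fun e => Sym2.attachWith e.1 (h0 e.1 e.2) with hF
  have hFval : ∀ e : {e // e ∈ M0}, (F e).map Subtype.val = e.1 := by
    intro e
    exact Sym2.attachWith_map_subtypeVal _
  have hFinj : Function.Injective F := by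
    intro e1 e2 h
    have : e1.1 = e2.1 := by rw [← hFval e1, ← hFval e2, h]
    exact Subtype.ext this
  refine ⟨M0.attach.image F, ?_, ?_⟩
  · have hmem' : ∀ z ∈ M0.attach.image F, z.map Subtype.val ∈ M0 := by
      intro z hz
      obtain ⟨e, _, rfl⟩ := Finset.mem_image.mp hz
      rw [hFval]
      exact e.2
    constructor
    · intro z hz
      rw [Finset.mem_coe] at hz
      rw [induce_edgeSet]
      exact hM.1 (Finset.mem_coe.mpr (Finset.mem_of_mem_erase (hmem' z hz)))
    · intro e he f hf hne u hu v hv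
      rw [Finset.mem_coe] at he hf
      obtain ⟨e', _, rfl⟩ := Finset.mem_image.mp he
      obtain ⟨f', _, rfl⟩ := Finset.mem_image.mp hf
      have hne' : e'.1 ≠ f'.1 := by
        intro h
        exact hne (congrArg F (Subtype.ext h))
      have hu' : u.1 ∈ e'.1 := by
        rw [← hFval e']
        exact Sym2.mem_map.mpr ⟨u, hu, rfl⟩
      have hv' : v.1 ∈ f'.1 := by
        rw [← hFval f']
        exact Sym2.mem_map.mpr ⟨v, hv, rfl⟩
      obtain ⟨h1, h2⟩ := hM.2 e'.1 (Finset.mem_coe.mpr (Finset.mem_of_mem_erase e'.2))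
        f'.1 (Finset.mem_coe.mpr (Finset.mem_of_mem_erase f'.2)) hne' u.1 hu' v.1 hv'
      exact ⟨fun h => h1 (congrArg Subtype.val h), fun h => h2 (by simpa using h)⟩
  · rw [Finset.card_image_of_injective _ hFinj, Finset.card_attach]
    exact Finset.card_erase_add_one hmem

/-- soundness of simplification rule S3, pendant-edge case: if `b` has
degree 2 with neighbours `d` and `c`, and `c` has degree 1, then some maximum induced
matching contains `{b,c}`, and `maxIM G = 1 + maxIM (G − {b,c,d})`. -/
theorem stmt_9 {V : Type*} [Fintype V] [DecidableEq V] (G : SimpleGraph V)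
    [DecidableRel G.Adj] (b c d : V)
    (hb : G.degree b = 2) (hnb : G.neighborSet b = {d, c}) (hc : G.degree c = 1) :
    (∃ M : Finset (Sym2 V), IsInducedMatching G (↑M) ∧ M.card = maxIM G ∧
      s(b, c) ∈ M) ∧
    maxIM G = 1 + maxIM (G.induce ({b, c, d} : Set V)ᶜ) := by
  classical
  -- basic adjacency facts
  have hbd : G.Adj b d := by
    have : d ∈ G.neighborSet b := by rw [hnb]; exact Set.mem_insert d {c}
    exact this
  have hbc : G.Adj b c := by
    have : c ∈ G.neighborSet b := by rw [hnb]; simp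
    exact this
  have hbadj : ∀ x, G.Adj b x → x = d ∨ x = c := by
    intro x hx
    have : x ∈ G.neighborSet b := hx
    rw [hnb] at this
    simpa using this
  have hcadj : ∀ x, G.Adj c x → x = b := by
    intro x hx
    have h1 : x ∈ G.neighborFinset c := (SimpleGraph.mem_neighborFinset G c x).mpr hx
    have h2 : b ∈ G.neighborFinset c := (SimpleGraph.mem_neighborFinset G c b).mpr hbc.symm
    exact Finset.card_le_one.mp (le_of_eq hc) x h1 b h2
  -- edge characterization for c
  have hec : ∀ e ∈ G.edgeSet, c ∈ e → e = s(b, c) := by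
    intro e
    induction e using Sym2.ind with
    | _ x y =>
      intro hxy hcxy
      rw [SimpleGraph.mem_edgeSet] at hxy
      rw [Sym2.mem_iff] at hcxy
      rcases hcxy with rfl | rfl
      · obtain rfl := hcadj y hxy
        rw [Sym2.eq_swap]
      · obtain rfl := hcadj x hxy.symm
        rfl
  -- compatibility of s(b,c) with an edge avoiding {b,c,d}
  have hcompat : ∀ g ∈ G.edgeSet, b ∉ g → c ∉ g → d ∉ g →
      ∀ u ∈ s(b, c), ∀ v ∈ g, (u ≠ v ∧ ¬G.Adj u v) ∧ (v ≠ u ∧ ¬G.Adj v u) := by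
    intro g _ hbg hcg hdg u hu v hv
    rw [Sym2.mem_iff] at hu
    have h1 : u ≠ v := by
      rintro rfl
      rcases hu with rfl | rfl
      · exact hbg hv
      · exact hcg hv
    have h2 : ¬ G.Adj u v := by
      intro h
      rcases hu with rfl | rfl
      · rcases hbadj v h with rfl | rfl
        · exact hdg hv
        · exact hcg hv
      · obtain rfl := hcadj v h
        exact hbg hv
    exact ⟨⟨h1, h2⟩, h1.symm, fun h => h2 h.symm⟩
  -- obtain a maximum induced matching and transform it to contain s(b,c)
  obtain ⟨M, hM, hMcard⟩ := exists_max G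
  have hN : ∃ N : Finset (Sym2 V), IsInducedMatching G (↑N) ∧ N.card = maxIM G ∧
      s(b, c) ∈ N := by
    by_cases hin : s(b, c) ∈ M
    · exact ⟨M, hM, hMcard, hin⟩
    by_cases hcover : ∃ e ∈ M, b ∈ e ∨ d ∈ e
    · obtain ⟨e, heM, hbde⟩ := hcover
      have hkey : ∀ g ∈ M.erase e, b ∉ g ∧ c ∉ g ∧ d ∉ g := by
        intro g hg
        have hgM : g ∈ M := Finset.mem_of_mem_erase hg
        have hge : e ≠ g := fun h => (Finset.ne_of_mem_erase hg) h.symm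
        have pair := hM.2 e (Finset.mem_coe.mpr heM) g (Finset.mem_coe.mpr hgM) hge
        have hbg : b ∉ g := by
          intro hbg
          rcases hbde with hbe | hde
          · exact (pair b hbe b hbg).1 rfl
          · exact (pair d hde b hbg).2 hbd.symm
        refine ⟨hbg, ?_, ?_⟩
        · intro hcg
          have := hec g (hM.1 (Finset.mem_coe.mpr hgM)) hcg
          rw [this] at hbg
          exact hbg (Sym2.mem_mk_left b c)
        · intro hdg
          rcases hbde with hbe | hde
          · exact (pair b hbe d hdg).2 hbd
          · exact (pair d hde d hdg).1 rfl
      have hnm : s(b, c) ∉ M.erase e := fun h => hin (Finset.mem_of_mem_erase h)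
      refine ⟨insert s(b, c) (M.erase e), ⟨?_, ?_⟩, ?_, Finset.mem_insert_self _ _⟩
      · intro z hz
        rw [Finset.mem_coe, Finset.mem_insert] at hz
        rcases hz with rfl | hz
        · exact hbc
        · exact hM.1 (Finset.mem_coe.mpr (Finset.mem_of_mem_erase hz))
      · intro e1 he1 e2 he2 hne u hu v hv
        rw [Finset.mem_coe, Finset.mem_insert] at he1 he2
        rcases he1 with rfl | he1 <;> rcases he2 with rfl | he2
        · exact absurd rfl hne
        · obtain ⟨h1, h2, h3⟩ := hkey e2 he2
          exact (hcompat e2 (hM.1 (Finset.mem_coe.mpr (Finset.mem_of_mem_erase he2)))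
            h1 h2 h3 u hu v hv).1
        · obtain ⟨h1, h2, h3⟩ := hkey e1 he1
          exact (hcompat e1 (hM.1 (Finset.mem_coe.mpr (Finset.mem_of_mem_erase he1)))
            h1 h2 h3 v hv u hu).2
        · exact hM.2 e1 (Finset.mem_coe.mpr (Finset.mem_of_mem_erase he1))
            e2 (Finset.mem_coe.mpr (Finset.mem_of_mem_erase he2)) hne u hu v hv
      · rw [Finset.card_insert_of_notMem hnm, Finset.card_erase_add_one heM, hMcard]
    · -- no edge touches b, c, d : contradiction with maximality
      push_neg at hcover
      exfalso
      have hkey : ∀ g ∈ M, b ∉ g ∧ c ∉ g ∧ d ∉ g := by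
        intro g hg
        obtain ⟨h1, h2⟩ := hcover g hg
        refine ⟨h1, ?_, h2⟩
        intro hcg
        have := hec g (hM.1 (Finset.mem_coe.mpr hg)) hcg
        exact hin (this ▸ hg)
      have hnm : s(b, c) ∉ M := hin
      have hbig : IsInducedMatching G ↑(insert s(b, c) M) := by
        constructor
        · intro z hz
          rw [Finset.mem_coe, Finset.mem_insert] at hz
          rcases hz with rfl | hz
          · exact hbc
          · exact hM.1 (Finset.mem_coe.mpr hz)
        · intro e1 he1 e2 he2 hne u hu v hv
          rw [Finset.mem_coe, Finset.mem_insert] at he1 he2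
          rcases he1 with rfl | he1 <;> rcases he2 with rfl | he2
          · exact absurd rfl hne
          · obtain ⟨h1, h2, h3⟩ := hkey e2 he2
            exact (hcompat e2 (hM.1 (Finset.mem_coe.mpr he2)) h1 h2 h3 u hu v hv).1
          · obtain ⟨h1, h2, h3⟩ := hkey e1 he1
            exact (hcompat e1 (hM.1 (Finset.mem_coe.mpr he1)) h1 h2 h3 v hv u hu).2
          · exact hM.2 e1 (Finset.mem_coe.mpr he1) e2 (Finset.mem_coe.mpr he2) hne u hu v hv
      have := card_le_maxIM G hbig
      rw [Finset.card_insert_of_notMem hnm, hMcard] at this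
      omega
  obtain ⟨N, hNim, hNcard, hNmem⟩ := hN
  refine ⟨⟨N, hNim, hNcard, hNmem⟩, ?_⟩
  -- instances for the induced subgraph
  have instF : Fintype ↥(({b, c, d} : Set V)ᶜ) := Fintype.ofFinite _
  -- upper bound: maxIM G ≤ 1 + maxIM G'
  have havoid : ∀ e ∈ N, e ≠ s(b, c) → ∀ x ∈ e, x ∈ (({b, c, d} : Set V)ᶜ) := by
    intro e heN hne x hx
    have pair := hNim.2 e (Finset.mem_coe.mpr heN) s(b, c) (Finset.mem_coe.mpr hNmem) hne
    have h1 := (pair x hx b (Sym2.mem_mk_left b c))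
    have h2 := (pair x hx c (Sym2.mem_mk_right b c))
    simp only [Set.mem_compl_iff, Set.mem_insert_iff, Set.mem_singleton_iff]
    push_neg
    refine ⟨h1.1, h2.1, ?_⟩
    rintro rfl
    exact h1.2 hbd.symm
  obtain ⟨M'', hM''im, hM''card⟩ := proj_lemma G b c d N hNim hNmem havoid
  have hle : maxIM G ≤ 1 + maxIM (G.induce (({b, c, d} : Set V)ᶜ)) := by
    have := card_le_maxIM (G.induce (({b, c, d} : Set V)ᶜ)) hM''im
    omega
  -- lower bound
  obtain ⟨M', hM'im, hM'card⟩ := exists_max (G.induce (({b, c, d} : Set V)ᶜ))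
  obtain ⟨L, hLim, hLcard, _⟩ := lift_lemma G b c d hbc hbadj hcadj M' hM'im
  have hge : 1 + maxIM (G.induce (({b, c, d} : Set V)ᶜ)) ≤ maxIM G := by
    have := card_le_maxIM G hLim
    omega
  omega
end

section
/- Soundness of simplification rule S3 (degree-3 vertex with two pendant neighbours): let a be a vertex of degree 3 with neighbours d, c, c', where c and c' each have degree 1. Then there is a maximum induced matching of G containing the edge {a, c}; consequently the maximum induced matching size of G equals 1 plus the maximum induced matching size of G with vertices a, c, c', d removed. -/
open SimpleGraph

private lemma im_bddAbove {V : Type*} [Finite V] (G : SimpleGraph V) :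
    BddAbove {k | ∃ M : Finset (Sym2 V), IsInducedMatching G (↑M) ∧ M.card = k} := by
  haveI : Fintype V := Fintype.ofFinite V
  haveI := Classical.decEq V
  refine ⟨Fintype.card (Sym2 V), ?_⟩
  rintro k ⟨N, -, rfl⟩
  simpa using N.card_le_univ

private lemma im_card_le_maxIM {V : Type*} [Finite V] (G : SimpleGraph V)
    (M : Finset (Sym2 V)) (hM : IsInducedMatching G ↑M) : M.card ≤ maxIM G :=
  le_csSup (im_bddAbove G) ⟨M, hM, rfl⟩

private lemma exists_maxIM {V : Type*} [Finite V] (G : SimpleGraph V) :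
    ∃ M : Finset (Sym2 V), IsInducedMatching G ↑M ∧ M.card = maxIM G := by
  have hne : {k | ∃ M : Finset (Sym2 V), IsInducedMatching G (↑M) ∧ M.card = k}.Nonempty :=
    ⟨0, ∅, ⟨by simp, by simp⟩, by simp⟩
  obtain ⟨M, hM, hc⟩ := Nat.sSup_mem hne (im_bddAbove G)
  exact ⟨M, hM, hc⟩

/-- soundness of simplification rule S3, degree-3 vertex with two pendant
neighbours: if `a` has degree 3 with neighbours `d`, `c`, `c'`, where `c` and `c'` have
degree 1, then some maximum induced matching contains `{a,c}`, and
`maxIM G = 1 + maxIM (G − {a,c,c',d})`. -/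
theorem stmt_10 {V : Type*} [Fintype V] [DecidableEq V] (G : SimpleGraph V)
    [DecidableRel G.Adj] (a c c' d : V)
    (ha : G.degree a = 3) (hna : G.neighborSet a = {d, c, c'})
    (hc : G.degree c = 1) (hc' : G.degree c' = 1) :
    (∃ M : Finset (Sym2 V), IsInducedMatching G (↑M) ∧ M.card = maxIM G ∧
      s(a, c) ∈ M) ∧
    maxIM G = 1 + maxIM (G.induce ({a, c, c', d} : Set V)ᶜ) := by
  classical
  set S : Set V := {a, c, c', d} with hS
  have hmemS : ∀ v, v ∈ S ↔ v = a ∨ v = c ∨ v = c' ∨ v = d := by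
    intro v; simp [hS, Set.mem_insert_iff]
  have hadj : ∀ v, G.Adj a v ↔ v = d ∨ v = c ∨ v = c' := by
    intro v; rw [← SimpleGraph.mem_neighborSet, hna]; simp [Set.mem_insert_iff]
  have hac : G.Adj a c := (hadj c).mpr (Or.inr (Or.inl rfl))
  have hac' : G.Adj a c' := (hadj c').mpr (Or.inr (Or.inr rfl))
  have had : G.Adj a d := (hadj d).mpr (Or.inl rfl)
  -- pendant vertices
  have pendant : ∀ x : V, G.degree x = 1 → G.Adj a x → ∀ v, G.Adj x v → v = a := by
    intro x hx hax v hv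
    have h1 : ∀ u ∈ G.neighborFinset x, ∀ w ∈ G.neighborFinset x, u = w :=
      Finset.card_le_one.mp (le_of_eq hx)
    exact h1 v (by simp [hv]) a (by simp [hax.symm])
  have hcp : ∀ v, G.Adj c v → v = a := pendant c hc hac
  have hc'p : ∀ v, G.Adj c' v → v = a := pendant c' hc' hac'
  -- any edge touching S contains a or d
  have htouch : ∀ e ∈ G.edgeSet, ∀ u ∈ e, u ∈ S → a ∈ e ∨ d ∈ e := by
    intro e he u hu huS
    induction e with
    | _ x y =>
      rw [SimpleGraph.mem_edgeSet] at he
      rw [Sym2.mem_iff] at hu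
      rcases (hmemS u).mp huS with rfl | rfl | rfl | rfl
      · left; rw [Sym2.mem_iff]; tauto
      · rcases hu with rfl | rfl
        · have := hcp y he; left; rw [Sym2.mem_iff]; tauto
        · have := hcp x he.symm; left; rw [Sym2.mem_iff]; tauto
      · rcases hu with rfl | rfl
        · have := hc'p y he; left; rw [Sym2.mem_iff]; tauto
        · have := hc'p x he.symm; left; rw [Sym2.mem_iff]; tauto
      · right; rw [Sym2.mem_iff]; tauto
  -- two distinct edges of an induced matching cannot both touch S
  have hconf : ∀ (N : Set (Sym2 V)), IsInducedMatching G N →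
      ∀ e ∈ N, ∀ f ∈ N, e ≠ f → ∀ u ∈ e, u ∈ S → ∀ v ∈ f, v ∈ S → False := by
    intro N hN e heN f hfN hef u hu huS v hv hvS
    rcases htouch e (hN.1 heN) u hu huS with hae | hde <;>
      rcases htouch f (hN.1 hfN) v hv hvS with haf | hdf
    · exact (hN.2 e heN f hfN hef a hae a haf).1 rfl
    · exact (hN.2 e heN f hfN hef a hae d hdf).2 had
    · exact (hN.2 e heN f hfN hef d hde a haf).2 had.symm
    · exact (hN.2 e heN f hfN hef d hde d hdf).1 rfl
  have haS : a ∈ S := (hmemS a).mpr (Or.inl rfl)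
  -- the edge s(a,c) is compatible with any edge avoiding S
  have hpair : ∀ f ∈ G.edgeSet, (∀ v ∈ f, v ∉ S) →
      ∀ u ∈ s(a, c), ∀ v ∈ f, u ≠ v ∧ ¬ G.Adj u v := by
    intro f hf hfS u hu v hv
    have hvS := hfS v hv
    have huS : u ∈ S := by
      rcases Sym2.mem_iff.mp hu with rfl | rfl
      · exact haS
      · exact (hmemS u).mpr (Or.inr (Or.inl rfl))
    refine ⟨fun h => hvS (h ▸ huS), fun hadj' => ?_⟩
    rcases Sym2.mem_iff.mp hu with rfl | rfl
    · rcases (hadj v).mp hadj' with rfl | rfl | rfl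
      · exact hvS ((hmemS v).mpr (Or.inr (Or.inr (Or.inr rfl))))
      · exact hvS ((hmemS v).mpr (Or.inr (Or.inl rfl)))
      · exact hvS ((hmemS v).mpr (Or.inr (Or.inr (Or.inl rfl))))
    · exact hvS ((hcp v hadj') ▸ haS)
  ------------------------------------------------------------------
  -- Part A : build a maximum induced matching containing s(a,c)
  ------------------------------------------------------------------
  obtain ⟨M, hM, hMcard⟩ := exists_maxIM G
  set T : Finset (Sym2 V) := M.filter (fun e => ∃ u ∈ e, u ∈ S) with hT
  have hTsub : T ⊆ M := Finset.filter_subset _ _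
  have hTcard : T.card ≤ 1 := by
    rw [Finset.card_le_one]
    intro e he f hf
    by_contra hef
    rw [hT, Finset.mem_filter] at he hf
    obtain ⟨heM, u, hu, huS⟩ := he
    obtain ⟨hfM, v, hv, hvS⟩ := hf
    exact hconf ↑M hM e heM f hfM hef u hu huS v hv hvS
  set N : Finset (Sym2 V) := insert s(a, c) (M \ T) with hN
  have hmemMT : ∀ f ∈ M \ T, ∀ v ∈ f, v ∉ S := by
    intro f hf v hv hvS
    rw [Finset.mem_sdiff] at hf
    exact hf.2 (Finset.mem_filter.mpr ⟨hf.1, v, hv, hvS⟩)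
  have hMTedge : ∀ f ∈ M \ T, f ∈ G.edgeSet := fun f hf =>
    hM.1 (Finset.mem_sdiff.mp hf).1
  have hNim : IsInducedMatching G ↑N := by
    constructor
    · intro e he
      rw [hN, Finset.coe_insert, Set.mem_insert_iff] at he
      rcases he with rfl | he
      · exact hac
      · exact hMTedge e he
    · intro e he f hf hef u hu v hv
      rw [hN, Finset.coe_insert, Set.mem_insert_iff] at he hf
      rcases he with rfl | he <;> rcases hf with rfl | hf
      · exact absurd rfl hef
      · exact hpair f (hMTedge f hf) (hmemMT f hf) u hu v hv
      · have := hpair e (hMTedge e he) (hmemMT e he) v hv u hu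
        exact ⟨fun h => this.1 h.symm, fun h => this.2 h.symm⟩
      · exact hM.2 e (Finset.mem_coe.mpr (Finset.mem_sdiff.mp (Finset.mem_coe.mp he)).1)
          f (Finset.mem_coe.mpr (Finset.mem_sdiff.mp (Finset.mem_coe.mp hf)).1) hef u hu v hv
  have hacMT : s(a, c) ∉ M \ T := by
    intro h
    rw [Finset.mem_sdiff] at h
    exact h.2 (Finset.mem_filter.mpr ⟨h.1, a, Sym2.mem_mk_left a c, haS⟩)
  have hNcard : N.card = (M \ T).card + 1 := Finset.card_insert_of_notMem hacMT
  have hsd : (M \ T).card = M.card - T.card := Finset.card_sdiff_of_subset hTsub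
  have hTM : T.card ≤ M.card := Finset.card_le_card hTsub
  have hNle : N.card ≤ maxIM G := im_card_le_maxIM G N hNim
  have hNeq : N.card = maxIM G := le_antisymm hNle (by omega)
  have hacN : s(a, c) ∈ N := Finset.mem_insert_self _ _
  refine ⟨⟨N, hNim, hNeq, hacN⟩, ?_⟩
  ------------------------------------------------------------------
  -- Part B
  ------------------------------------------------------------------
  have hedge : ∀ (e' : Sym2 ↥(Sᶜ)),
      e' ∈ (G.induce Sᶜ).edgeSet ↔ (e'.map Subtype.val) ∈ G.edgeSet := by
    intro e'
    induction e' with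
    | _ x y => simp [SimpleGraph.mem_edgeSet]
  -- ≤ : from the maximum matching N containing s(a,c)
  set N₀ : Finset (Sym2 V) := N.erase s(a, c) with hN₀
  have hN₀S : ∀ f ∈ N₀, ∀ v ∈ f, v ∈ Sᶜ := by
    intro f hf v hv
    have hfne := Finset.ne_of_mem_erase hf
    have hfN := Finset.mem_of_mem_erase hf
    simp only [Set.mem_compl_iff]
    intro hvS
    exact hconf ↑N hNim f (Finset.mem_coe.mpr hfN) s(a, c) (Finset.mem_coe.mpr hacN)
      hfne v hv hvS a (Sym2.mem_mk_left a c) haS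
  set N' : Finset (Sym2 ↥(Sᶜ)) :=
    N₀.attach.image (fun x => Sym2.pmap Subtype.mk x.1 (hN₀S x.1 x.2)) with hN'
  have hmapval : ∀ (f : Sym2 V) (h : ∀ v ∈ f, v ∈ Sᶜ),
      (Sym2.pmap Subtype.mk f h).map Subtype.val = f := fun f h =>
    Sym2.pmap_subtype_map_subtypeVal f h
  have hinj : Function.Injective
      (fun x : {x // x ∈ N₀} => Sym2.pmap Subtype.mk x.1 (hN₀S x.1 x.2)) := by
    intro x y hxy
    apply Subtype.ext
    have h2 := congrArg (Sym2.map Subtype.val) hxy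
    simpa using h2
  have hN'card : N'.card = N₀.card := by
    rw [hN', Finset.card_image_of_injective _ hinj, Finset.card_attach]
  have hN'mem : ∀ e' ∈ N', ∃ f, ∃ hf : f ∈ N₀, e' = Sym2.pmap Subtype.mk f (hN₀S f hf) := by
    intro e' he'
    rw [hN', Finset.mem_image] at he'
    obtain ⟨⟨f, hf⟩, -, rfl⟩ := he'
    exact ⟨f, hf, rfl⟩
  have hN'im : IsInducedMatching (G.induce Sᶜ) ↑N' := by
    constructor
    · intro e' he'
      obtain ⟨f, hf, rfl⟩ := hN'mem e' (Finset.mem_coe.mp he')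
      rw [hedge, hmapval]
      exact hNim.1 (Finset.mem_coe.mpr (Finset.mem_of_mem_erase hf))
    · intro e' he' f' hf' hef' u' hu' v' hv'
      obtain ⟨e, he, rfl⟩ := hN'mem e' (Finset.mem_coe.mp he')
      obtain ⟨f, hf, rfl⟩ := hN'mem f' (Finset.mem_coe.mp hf')
      have hef : e ≠ f := by
        intro h; apply hef'
        subst h
        rfl
      have hue : (u' : V) ∈ e := by
        rcases (Sym2.mem_pmap_iff _ _ _ _).mp hu' with ⟨x, hx, rfl⟩
        exact hx
      have hvf : (v' : V) ∈ f := by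
        rcases (Sym2.mem_pmap_iff _ _ _ _).mp hv' with ⟨x, hx, rfl⟩
        exact hx
      have := hNim.2 e (Finset.mem_coe.mpr (Finset.mem_of_mem_erase he))
        f (Finset.mem_coe.mpr (Finset.mem_of_mem_erase hf)) hef
        (u' : V) hue (v' : V) hvf
      refine ⟨fun h => this.1 (by rw [h]), fun h => this.2 ?_⟩
      simpa using h
  have hN₀le : N₀.card ≤ maxIM (G.induce Sᶜ) := by
    rw [← hN'card]; exact im_card_le_maxIM _ N' hN'im
  have hN₀card : N₀.card = N.card - 1 := by
    rw [hN₀, Finset.card_erase_of_mem hacN]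
  have hNpos : 1 ≤ N.card := Finset.card_pos.mpr ⟨_, hacN⟩
  -- ≥ direction
  obtain ⟨P, hP, hPcard⟩ := exists_maxIM (G.induce Sᶜ)
  have himj : Function.Injective (Sym2.map (Subtype.val : ↥(Sᶜ) → V)) :=
    Sym2.map.injective Subtype.val_injective
  have hQS : ∀ f ∈ P.image (Sym2.map Subtype.val), ∀ v ∈ f, v ∉ S := by
    intro f hf v hv
    rw [Finset.mem_image] at hf
    obtain ⟨f', -, rfl⟩ := hf
    rcases Sym2.mem_map.mp hv with ⟨v', -, rfl⟩
    exact v'.2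
  have hQedge : ∀ f ∈ P.image (Sym2.map Subtype.val), f ∈ G.edgeSet := by
    intro f hf
    rw [Finset.mem_image] at hf
    obtain ⟨f', hf', rfl⟩ := hf
    exact (hedge f').mp (hP.1 (Finset.mem_coe.mpr hf'))
  have hacQ : s(a, c) ∉ P.image (Sym2.map Subtype.val) :=
    fun h => hQS _ h a (Sym2.mem_mk_left a c) haS
  set Q : Finset (Sym2 V) := insert s(a, c) (P.image (Sym2.map Subtype.val)) with hQ
  have hQim : IsInducedMatching G ↑Q := by
    constructor
    · intro e he
      rw [hQ, Finset.coe_insert, Set.mem_insert_iff] at he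
      rcases he with rfl | he
      · exact hac
      · exact hQedge e he
    · intro e he f hf hef u hu v hv
      rw [hQ, Finset.coe_insert, Set.mem_insert_iff] at he hf
      rcases he with rfl | he <;> rcases hf with rfl | hf
      · exact absurd rfl hef
      · exact hpair f (hQedge f hf) (hQS f hf) u hu v hv
      · have := hpair e (hQedge e he) (hQS e he) v hv u hu
        exact ⟨fun h => this.1 h.symm, fun h => this.2 h.symm⟩
      · rw [Finset.mem_coe, Finset.mem_image] at he hf
        obtain ⟨e', he', rfl⟩ := he
        obtain ⟨f', hf', rfl⟩ := hf
        have hef' : e' ≠ f' := fun h => hef (by rw [h])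
        rcases Sym2.mem_map.mp hu with ⟨u', hu', rfl⟩
        rcases Sym2.mem_map.mp hv with ⟨v', hv', rfl⟩
        have := hP.2 e' (Finset.mem_coe.mpr he') f' (Finset.mem_coe.mpr hf') hef'
          u' hu' v' hv'
        refine ⟨fun h => this.1 (Subtype.ext h), fun h => this.2 ?_⟩
        simpa using h
  have hQcard : Q.card = P.card + 1 := by
    rw [hQ, Finset.card_insert_of_notMem hacQ,
      Finset.card_image_of_injective _ himj]
  have hQle : Q.card ≤ maxIM G := im_card_le_maxIM G Q hQim
  omega
end

section
/- Measure decrease upon vertex removal: let G have maximum degree 3 with the weight function assigning 1 to degree-3 vertices, s to degree-2 vertices (1/2 ≤ s ≤ 1), and 0 to vertices of degree ≤ 1. If v is a vertex of degree d(v), then removing v from G decreases the total measure μ by at least w(v) plus (1−s) for each degree-3 neighbour of v plus s for each degree-2 neighbour of v. -/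
open SimpleGraph Finset

/-- The measure-and-conquer weight of a vertex: `1` for degree 3, `s` for degree 2,
`0` for degree at most 1. -/
noncomputable def vertexWeight {V : Type*} (G : SimpleGraph V) (s : ℝ) (v : V) : ℝ :=
  if Nat.card (G.neighborSet v) = 3 then 1
  else if Nat.card (G.neighborSet v) = 2 then s else 0

/-- The measure `μ(G)`: the sum over all vertices of their weights. -/
noncomputable def graphMeasure {V : Type*} [Fintype V] (G : SimpleGraph V) (s : ℝ) : ℝ :=
  ∑ v : V, vertexWeight G s v

/-- measure decrease upon vertex removal: removing a vertex `v` from a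
graph of maximum degree 3 decreases the measure by at least `w(v)` plus `1−s` for each
degree-3 neighbour and `s` for each degree-2 neighbour of `v`. -/
theorem stmt_13 {V : Type*} [Fintype V] [DecidableEq V] (G : SimpleGraph V) (s : ℝ)
    (hs1 : 1 / 2 ≤ s) (hs2 : s ≤ 1)
    (hdeg : ∀ u : V, Nat.card (G.neighborSet u) ≤ 3) (v : V) :
    graphMeasure (G.induce {u : V | u ≠ v}) s
      + vertexWeight G s v
      + (1 - s) * (Nat.card {u : V | G.Adj v u ∧ Nat.card (G.neighborSet u) = 3} : ℝ)
      + s * (Nat.card {u : V | G.Adj v u ∧ Nat.card (G.neighborSet u) = 2} : ℝ)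
      ≤ graphMeasure G s := by
  classical
  set S : Set V := {u : V | u ≠ v} with hS
  -- degree in the induced graph
  have hdeg' : ∀ x : S, Nat.card ((G.induce S).neighborSet x)
      = if G.Adj v ↑x then Nat.card (G.neighborSet (↑x : V)) - 1
        else Nat.card (G.neighborSet (↑x : V)) := by
    intro x
    have e1 : Nat.card ((G.induce S).neighborSet x)
        = Nat.card {b : V | b ≠ v ∧ G.Adj ↑x b} := by
      refine Nat.card_congr ?_
      exact Equiv.subtypeSubtypeEquivSubtypeInter (fun b => b ≠ v) (fun b => G.Adj ↑x b)
    have e2 : {b : V | b ≠ v ∧ G.Adj ↑x b} = G.neighborSet ↑x \ {v} := by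
      ext b
      simp only [Set.mem_setOf_eq, Set.mem_diff, SimpleGraph.mem_neighborSet,
        Set.mem_singleton_iff]
      tauto
    rw [e1, e2]
    by_cases hadj : G.Adj v ↑x
    · rw [if_pos hadj, Nat.card_coe_set_eq, Nat.card_coe_set_eq,
        Set.ncard_diff_singleton_of_mem
          (by simpa [SimpleGraph.mem_neighborSet] using hadj.symm)]
    · rw [if_neg hadj, Set.diff_singleton_eq_self
        (by simp only [SimpleGraph.mem_neighborSet]; exact fun h => hadj h.symm)]
  -- pointwise weight identity
  have hw : ∀ x : S, vertexWeight (G.induce S) s x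
      + (if G.Adj v ↑x ∧ Nat.card (G.neighborSet (↑x : V)) = 3 then (1 - s) else 0)
      + (if G.Adj v ↑x ∧ Nat.card (G.neighborSet (↑x : V)) = 2 then s else 0)
      = vertexWeight G s ↑x := by
    intro x
    have hx := hdeg' x
    have hle := hdeg (↑x : V)
    unfold vertexWeight
    rw [hx]
    by_cases hadj : G.Adj v ↑x
    · simp only [if_pos hadj, hadj, true_and]
      set k := Nat.card (G.neighborSet (↑x : V)) with hk
      interval_cases k <;> norm_num <;> ring
    · simp [hadj]
  -- counting lemma
  have hcard : ∀ P : V → Prop, Nat.card {u : V | P u} = (univ.filter P).card := by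
    intro P
    rw [Nat.card_eq_fintype_card]
    exact Fintype.card_of_subtype (univ.filter P) (by simp)
  -- sums over the subtype
  have hmem : ∀ u : V, u ∈ univ.erase v ↔ u ∈ S := by
    intro u; simp [hS, Finset.mem_erase]
  have hsub : ∀ f : V → ℝ, ∑ u ∈ univ.erase v, f u = ∑ x : S, f ↑x := by
    intro f
    exact Finset.sum_subtype (univ.erase v) hmem f
  -- indicator sums
  have hind : ∀ c : ℝ, ∀ P : V → Prop, ¬ P v →
      ∑ x : S, (if P ↑x then c else 0) = c * (Nat.card {u : V | P u} : ℝ) := by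
    intro c P hPv
    rw [hcard P, ← hsub fun u => if P u then c else 0,
      Finset.sum_erase _ (by simp [hPv]), ← Finset.sum_filter, Finset.sum_const,
      nsmul_eq_mul, mul_comm]
  have key : graphMeasure (G.induce S) s
      + (1 - s) * (Nat.card {u : V | G.Adj v u ∧ Nat.card (G.neighborSet u) = 3} : ℝ)
      + s * (Nat.card {u : V | G.Adj v u ∧ Nat.card (G.neighborSet u) = 2} : ℝ)
      = ∑ x : S, vertexWeight G s ↑x := by
    rw [← hind (1 - s) (fun u => G.Adj v u ∧ Nat.card (G.neighborSet u) = 3)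
        (by simp [SimpleGraph.irrefl]),
      ← hind s (fun u => G.Adj v u ∧ Nat.card (G.neighborSet u) = 2)
        (by simp [SimpleGraph.irrefl])]
    rw [graphMeasure, ← Finset.sum_add_distrib, ← Finset.sum_add_distrib]
    refine Finset.sum_congr rfl fun x _ => ?_
    convert hw x using 2 <;> congr!
  have final : graphMeasure (G.induce S) s
      + vertexWeight G s v
      + (1 - s) * (Nat.card {u : V | G.Adj v u ∧ Nat.card (G.neighborSet u) = 3} : ℝ)
      + s * (Nat.card {u : V | G.Adj v u ∧ Nat.card (G.neighborSet u) = 2} : ℝ)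
      = graphMeasure G s := by
    have : graphMeasure G s = vertexWeight G s v + ∑ x : S, vertexWeight G s ↑x := by
      rw [← hsub fun u => vertexWeight G s u, graphMeasure,
        Finset.add_sum_erase _ _ (Finset.mem_univ v)]
    rw [this, ← key]; ring
  exact final.le
end
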